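/- arXiv:1112.0280 — 2 statements merged into one kernel-verified Lean document; each statement's English description precedes it below -/
import Mathlib

section
/- Let E = ℝ³ with the Euclidean inner product and L(b₁, b₂, b₃) = (b₂, b₁, b₃). Then the helix {(cos θ, sin θ, θ) : θ ∈ ℝ} is an L-positive subset of ℝ³, but for 0 < λ < 1 the helix {(cos θ, sin θ, λθ) : θ ∈ ℝ} is not L-positive. -/
/-- The quadratic form `q_L(b) = (1/2)⟨b, Lb⟩ = b₁ b₂ + (1/2) b₃²` associated with
the SNL map `L(b₁,b₂,b₃) = (b₂,b₁,b₃)` on Euclidean `ℝ³`. -/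
noncomputable def qHelix (b : ℝ × ℝ × ℝ) : ℝ := b.1 * b.2.1 + (1 / 2) * b.2.2 ^ 2

/-- A nonempty subset `A` of `ℝ³` is `L`-positive when `q_L(b - c) ≥ 0` for all `b, c ∈ A`. -/
def LPositiveHelix (A : Set (ℝ × ℝ × ℝ)) : Prop :=
  A.Nonempty ∧ ∀ b ∈ A, ∀ c ∈ A, 0 ≤ qHelix (b - c)

open Real in
lemma helix_key (θ φ : ℝ) :
    0 ≤ (cos θ - cos φ) * (sin θ - sin φ) + (1/2) * (θ - φ)^2 := by
  have hθ : θ = (θ+φ)/2 + (θ-φ)/2 := by ring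
  have hφ : φ = (θ+φ)/2 - (θ-φ)/2 := by ring
  set s := (θ+φ)/2
  set d := (θ-φ)/2
  rw [show θ = s + d from hθ, show φ = s - d from hφ]
  rw [cos_add, cos_sub, sin_add, sin_sub]
  nlinarith [(sin_sq_le_sq : sin d ^ 2 ≤ d ^ 2), sin_sq_add_cos_sq s, sq_nonneg (sin s + cos s),
    sq_nonneg (sin s - cos s), sq_nonneg (sin d), sq_nonneg d]

theorem stmt6 :
    LPositiveHelix {p : ℝ × ℝ × ℝ | ∃ θ : ℝ, p = (Real.cos θ, Real.sin θ, θ)} ∧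
      ∀ lam : ℝ, 0 < lam → lam < 1 →
        ¬ LPositiveHelix {p : ℝ × ℝ × ℝ | ∃ θ : ℝ, p = (Real.cos θ, Real.sin θ, lam * θ)} := by
  constructor
  · refine ⟨⟨_, ⟨0, rfl⟩⟩, ?_⟩
    rintro b ⟨θ, rfl⟩ c ⟨φ, rfl⟩
    have := helix_key θ φ
    simp only [qHelix, Prod.fst_sub, Prod.snd_sub, Prod.mk_sub_mk]
    linarith
  · rintro lam hl0 hl1 ⟨-, hpos⟩
    set t : ℝ := min 1 (Real.sqrt (1 - lam)) with ht
    have ht0 : 0 < t := lt_min one_pos (Real.sqrt_pos.2 (by linarith))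
    have ht1 : t ≤ 1 := min_le_left _ _
    have ht2 : t^2 ≤ 1 - lam := by
      have := min_le_right 1 (Real.sqrt (1 - lam))
      calc t^2 ≤ (Real.sqrt (1 - lam))^2 := by nlinarith [Real.sqrt_nonneg (1 - lam)]
        _ = 1 - lam := Real.sq_sqrt (by linarith)
    have hsin : lam * t < Real.sin t := by
      have h1 := Real.sin_gt_sub_cube ht0
      nlinarith
    have h := hpos _ ⟨Real.pi/4 + t, rfl⟩ _ ⟨Real.pi/4 - t, rfl⟩
    simp only [qHelix, Prod.fst_sub, Prod.snd_sub] at h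
    rw [Real.cos_add, Real.cos_sub, Real.sin_add, Real.sin_sub,
      Real.cos_pi_div_four, Real.sin_pi_div_four] at h
    have hs2 : (Real.sqrt 2)^2 = 2 := Real.sq_sqrt (by norm_num)
    have hst : 0 < Real.sin t := lt_trans (by positivity) hsin
    have hlt : (lam * t)^2 < (Real.sin t)^2 := by nlinarith [mul_pos hl0 ht0]
    nlinarith [h, hs2, hlt]
end

section
/- Let E be a nonzero real Banach space, B := E × E*, B* = E* × E**, L(x, x*) = (x*, x̂), L̃(y*, y**) = (y**, ŷ*), q_{L̃}(y*, y**) = ⟨y*, y**⟩. Then for every d* ∈ B*, inf_{d ∈ B} [q_{L̃}(d* − Ld) + (1/2)‖d* − Ld‖²] ≤ 0. -/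
open NormedSpace

lemma aux_exists_z (E : Type*) [NormedAddCommGroup E] [NormedSpace ℝ E]
    (y'' : StrongDual ℝ (StrongDual ℝ E)) {ε : ℝ} (hε : 0 < ε) :
    ∃ z : StrongDual ℝ E, ‖z‖ ≤ ‖y''‖ ∧ ‖y''‖ ^ 2 - ε ≤ y'' z := by
  by_cases h : ‖y''‖ ^ 2 - ε ≤ 0
  · exact ⟨0, by rw [norm_zero]; exact norm_nonneg y'', by simpa using h⟩
  · push_neg at h
    have hy : 0 < ‖y''‖ := by nlinarith [norm_nonneg y'']
    have hc : (‖y''‖ ^ 2 - ε) / ‖y''‖ < ‖y''‖ := by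
      rw [div_lt_iff₀ hy]; nlinarith
    obtain ⟨x, hx1, hx2⟩ := y''.exists_lt_apply_of_lt_opNorm hc
    rw [Real.norm_eq_abs, div_lt_iff₀ hy] at hx2
    rcases abs_cases (y'' x) with ⟨he, _⟩ | ⟨he, _⟩
    · refine ⟨‖y''‖ • x, ?_, ?_⟩
      · rw [norm_smul, Real.norm_eq_abs, abs_of_nonneg hy.le]
        nlinarith
      · rw [map_smul, smul_eq_mul]
        nlinarith
    · refine ⟨‖y''‖ • (-x), ?_, ?_⟩
      · rw [norm_smul, Real.norm_eq_abs, abs_of_nonneg hy.le, norm_neg]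
        nlinarith
      · rw [map_smul, map_neg, smul_eq_mul]
        nlinarith

theorem stmt8 (E : Type*) [NormedAddCommGroup E] [NormedSpace ℝ E] [CompleteSpace E]
    [Nontrivial E] :
    -- for every `d* = (y*, y**) ∈ B* = E* × E**`,
    -- `inf_{d = (x, x*) ∈ B} [q_{L̃}(d* − Ld) + (1/2)‖d* − Ld‖²] ≤ 0`,
    -- where `L(x, x*) = (x*, x̂)`, `d* − Ld = (y* − x*, y** − x̂)`,
    -- `q_{L̃}(y*, y**) = ⟨y*, y**⟩` and `‖(y*, y**)‖² = ‖y*‖² + ‖y**‖²`.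
    ∀ (y' : StrongDual ℝ E) (y'' : StrongDual ℝ (StrongDual ℝ E)),
      ⨅ d : E × StrongDual ℝ E,
        ((y'' - inclusionInDoubleDual ℝ E d.1) (y' - d.2) +
          (1 / 2) * (‖y' - d.2‖ ^ 2 + ‖y'' - inclusionInDoubleDual ℝ E d.1‖ ^ 2)) ≤ 0 := by
  intro y' y''
  set f : E × StrongDual ℝ E → ℝ := fun d =>
    ((y'' - inclusionInDoubleDual ℝ E d.1) (y' - d.2) +
      (1 / 2) * (‖y' - d.2‖ ^ 2 + ‖y'' - inclusionInDoubleDual ℝ E d.1‖ ^ 2)) with hf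
  by_cases hb : BddBelow (Set.range f)
  · refine le_of_forall_pos_le_add fun ε hε => ?_
    obtain ⟨z, hz1, hz2⟩ := aux_exists_z E y'' hε
    have key : f (0, y' + z) ≤ ε := by
      have : y' - (y' + z) = -z := by abel
      have e : y'' - inclusionInDoubleDual ℝ E 0 = y'' := by rw [map_zero]; exact sub_zero y''
      simp only [hf, this, e, sub_zero, map_neg, norm_neg]
      nlinarith [norm_nonneg z, norm_nonneg y'']
    calc ⨅ d, f d ≤ f (0, y' + z) := ciInf_le hb _
      _ ≤ 0 + ε := by linarith
  · rw [Real.iInf_of_not_bddBelow hb]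
end
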